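/- arXiv:1612.07552 — 7 statements merged into one kernel-verified Lean document; each statement's English description precedes it below -/
import Mathlib

section
/- Let f be a greyscale of a finite simple connected graph G, let u and v be distinct vertices, and let w be a vertex with w ≠ u, w ≠ v lying on some u–v geodesic (i.e. d(u,w) + d(w,v) = d(u,v)). Then either F(u,v) < max{F(u,w), F(w,v)} or F(u,v) = F(u,w) = F(w,v); moreover, the equalities F(u,v) = F(u,w) = F(w,v) can hold only if f(w) belongs to the closed interval with endpoints f(u) and f(v). -/
open SimpleGraph

/-- A greyscale of a graph on vertex set `V`: a map to `[0,1]` attaining both `0` and `1`. -/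
def IsGreyscale {V : Type*} (f : V → ℝ) : Prop :=
  (∀ w, 0 ≤ f w ∧ f w ≤ 1) ∧ (∃ a, f a = 0) ∧ (∃ b, f b = 1)

/-- The grey tone of an edge: the absolute difference of the tones of its endpoints. -/
noncomputable def greyTone {V : Type*} (f : V → ℝ) : Sym2 V → ℝ :=
  Sym2.lift ⟨fun a b => |f a - f b|, fun _ _ => abs_sub_comm _ _⟩

/-- The edge-colour-increase mapping `F(u,v) = |f u - f v| / d(u,v)` (and `0` on the diagonal). -/
noncomputable def ecim {V : Type*} (G : SimpleGraph V) (f : V → ℝ) (u v : V) : ℝ :=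
  letI := Classical.dec (u = v)
  if u = v then 0 else |f u - f v| / (G.dist u v : ℝ)

/-- The support greyscale for antipodal vertices `u, v` of a graph of diameter `D`. -/
noncomputable def supportGreyscale {V : Type*} (G : SimpleGraph V) (u v : V) (D : ℕ)
    (w : V) : ℝ :=
  ((G.dist w u : ℝ) - (G.dist w v : ℝ) + (D : ℝ)) / (2 * (D : ℝ))

lemma between_of_abs_eq {x y z : ℝ} (h : |x - z| = |x - y| + |y - z|) :
    y ∈ Set.uIcc x z := by
  rw [Set.mem_uIcc]
  rcases abs_cases (x - z) with ⟨e1, _⟩ | ⟨e1, _⟩ <;>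
    rcases abs_cases (x - y) with ⟨e2, _⟩ | ⟨e2, _⟩ <;>
      rcases abs_cases (y - z) with ⟨e3, _⟩ | ⟨e3, _⟩ <;>
        first
          | (left; constructor <;> linarith)
          | (right; constructor <;> linarith)

theorem stmt_3 {V : Type*} [Fintype V] (G : SimpleGraph V) (hG : G.Connected)
    (f : V → ℝ) (hf : IsGreyscale f) (u v w : V)
    (huv : u ≠ v) (hwu : w ≠ u) (hwv : w ≠ v)
    (hgeo : G.dist u w + G.dist w v = G.dist u v) :
    (ecim G f u v < max (ecim G f u w) (ecim G f w v) ∨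
      (ecim G f u v = ecim G f u w ∧ ecim G f u w = ecim G f w v)) ∧
    ((ecim G f u v = ecim G f u w ∧ ecim G f u w = ecim G f w v) →
      f w ∈ Set.uIcc (f u) (f v)) := by
  have hna : 0 < G.dist u w := hG.pos_dist_of_ne (Ne.symm hwu)
  have hnb : 0 < G.dist w v := hG.pos_dist_of_ne hwv
  set a : ℝ := (G.dist u w : ℝ) with ha'
  set b : ℝ := (G.dist w v : ℝ) with hb'
  have ha : (0 : ℝ) < a := by rw [ha']; exact_mod_cast hna
  have hb : (0 : ℝ) < b := by rw [hb']; exact_mod_cast hnb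
  have hab : (G.dist u v : ℝ) = a + b := by
    rw [ha', hb', ← Nat.cast_add, hgeo]
  set A : ℝ := |f u - f w| with hA'
  set B : ℝ := |f w - f v| with hB'
  set C : ℝ := |f u - f v| with hC'
  have hCAB : C ≤ A + B := by
    calc C = |(f u - f w) + (f w - f v)| := by ring_nf; exact hC'
    _ ≤ A + B := abs_add_le _ _
  have e1 : ecim G f u v = C / (a + b) := by
    rw [ecim, if_neg huv, hab]
  have e2 : ecim G f u w = A / a := by
    rw [ecim, if_neg (Ne.symm hwu)]
  have e3 : ecim G f w v = B / b := by
    rw [ecim, if_neg hwv]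
  rw [e1, e2, e3]
  set m : ℝ := max (A / a) (B / b) with hm'
  have hAm : A ≤ m * a := by
    rw [← div_le_iff₀ ha]; exact le_max_left _ _
  have hBm : B ≤ m * b := by
    rw [← div_le_iff₀ hb]; exact le_max_right _ _
  have hCm : C / (a + b) ≤ m := by
    rw [div_le_iff₀ (by linarith)]
    calc C ≤ A + B := hCAB
    _ ≤ m * a + m * b := by linarith
    _ = m * (a + b) := by ring
  constructor
  · rcases lt_or_eq_of_le hCm with h | h
    · exact Or.inl h
    · right
      have hC : C = m * (a + b) := (div_eq_iff (by linarith)).mp h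
      have hAeq : A = m * a := by nlinarith
      have hBeq : B = m * b := by nlinarith
      constructor
      · rw [hC, hAeq, mul_div_assoc, mul_div_assoc,
          div_self (by linarith : a + b ≠ 0), div_self (ne_of_gt ha)]
      · rw [hAeq, hBeq, mul_div_assoc, mul_div_assoc,
          div_self (ne_of_gt ha), div_self (ne_of_gt hb)]
  · rintro ⟨h1, h2⟩
    have hAa : C * a = A * (a + b) := (div_eq_div_iff (by linarith) (ne_of_gt ha)).mp h1
    have hAB : A * b = B * a := (div_eq_div_iff (ne_of_gt ha) (ne_of_gt hb)).mp h2
    have hC : C = A + B := by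
      have h3 : C * a = (A + B) * a := by linear_combination hAa + hAB
      exact mul_right_cancel₀ (ne_of_gt ha) h3
    exact between_of_abs_eq (by rw [← hC'] ; rw [hC, hA', hB'])
end

section
/- Let f be a greyscale of a finite simple connected graph G and let u and v be distinct vertices such that F(u,v) = max over all pairs of vertices a,b of F(a,b), and suppose f(u) ≤ f(v). Then every vertex w lying on some u–v geodesic (d(u,w) + d(w,v) = d(u,v)) satisfies f(w) = f(u) + d(u,w)·F(u,v). -/
open SimpleGraph

theorem stmt_7 {V : Type*} [Fintype V] (G : SimpleGraph V) (hG : G.Connected)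
    (f : V → ℝ) (hf : IsGreyscale f) (u v : V) (huv : u ≠ v)
    (hmax : ∀ a b : V, ecim G f a b ≤ ecim G f u v) (hle : f u ≤ f v) :
    ∀ w : V, G.dist u w + G.dist w v = G.dist u v →
      f w = f u + (G.dist u w : ℝ) * ecim G f u v := by
  intro w hw
  set M := ecim G f u v with hM
  have hMnonneg : 0 ≤ M := le_trans (by simp [ecim]) (hmax u u)
  have claim : ∀ a b : V, |f a - f b| ≤ M * (G.dist a b : ℝ) := by
    intro a b
    by_cases h : a = b
    · simp [h]
    · have hd : 0 < (G.dist a b : ℝ) := by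
        exact_mod_cast hG.pos_dist_of_ne h
      have := hmax a b
      rw [hM] at this ⊢
      simp only [ecim, if_neg h] at this
      exact (div_le_iff₀ hd).mp this
  have hduv : 0 < (G.dist u v : ℝ) := by exact_mod_cast hG.pos_dist_of_ne huv
  have hMd : M * (G.dist u v : ℝ) = f v - f u := by
    rw [hM]; simp only [ecim, if_neg huv]
    rw [div_mul_cancel₀ _ (ne_of_gt hduv), abs_sub_comm, abs_of_nonneg (by linarith)]
  have h1 := abs_le.mp (claim u w)
  have h2 := abs_le.mp (claim w v)
  have hsum : (G.dist u w : ℝ) + (G.dist w v : ℝ) = (G.dist u v : ℝ) := by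
    exact_mod_cast congrArg (Nat.cast : ℕ → ℝ) hw
  have hMsum : M * (G.dist u w : ℝ) + M * (G.dist w v : ℝ) = f v - f u := by
    rw [← mul_add, hsum, hMd]
  have hub : f u - f w ≤ M * (G.dist u w : ℝ) := by linarith [h1.2, abs_nonneg (f u - f w)]
  linarith [h1.1, h1.2, h2.1, h2.2]
end

section
/- Let f be a greyscale of a finite simple connected graph G and let u and v be distinct vertices such that F(u,v) = max over all pairs of vertices a,b of F(a,b), and suppose f(v) ≤ f(u). Then every vertex w lying on some u–v geodesic (d(u,w) + d(w,v) = d(u,v)) satisfies f(w) = f(v) + d(w,v)·F(u,v). -/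
open SimpleGraph

theorem stmt_8 {V : Type*} [Fintype V] (G : SimpleGraph V) (hG : G.Connected)
    (f : V → ℝ) (hf : IsGreyscale f) (u v : V) (huv : u ≠ v)
    (hmax : ∀ a b : V, ecim G f a b ≤ ecim G f u v) (hle : f v ≤ f u) :
    ∀ w : V, G.dist u w + G.dist w v = G.dist u v →
      f w = f v + (G.dist w v : ℝ) * ecim G f u v := by
  intro w hw
  set M := ecim G f u v with hM
  have hduv : 0 < G.dist u v := hG.pos_dist_of_ne huv
  have hduvR : (0:ℝ) < (G.dist u v : ℝ) := by exact_mod_cast hduv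
  have hMval : M = (f u - f v) / (G.dist u v : ℝ) := by
    rw [hM, ecim, if_neg huv, abs_of_nonneg (by linarith)]
  have hM0 : 0 ≤ M := by
    rw [hMval]
    apply div_nonneg (by linarith) hduvR.le
  have key : ∀ a b : V, |f a - f b| ≤ M * (G.dist a b : ℝ) := by
    intro a b
    by_cases hab : a = b
    · subst hab
      simpa using mul_nonneg hM0 (Nat.cast_nonneg _)
    · have hd : (0:ℝ) < (G.dist a b : ℝ) := by
        exact_mod_cast hG.pos_dist_of_ne hab
      have hm := hmax a b
      rw [ecim, if_neg hab] at hm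
      calc |f a - f b| = |f a - f b| / (G.dist a b : ℝ) * (G.dist a b : ℝ) := by
            field_simp
        _ ≤ M * (G.dist a b : ℝ) := mul_le_mul_of_nonneg_right hm hd.le
  have h1 : f u - f w ≤ M * (G.dist u w : ℝ) := (le_abs_self _).trans (key u w)
  have h2 : f w - f v ≤ M * (G.dist w v : ℝ) := (le_abs_self _).trans (key w v)
  have heq : f u - f v = M * (G.dist u v : ℝ) := by
    rw [hMval]; field_simp
  have hsum : (G.dist u w : ℝ) + (G.dist w v : ℝ) = (G.dist u v : ℝ) := by
    exact_mod_cast congrArg (Nat.cast : ℕ → ℝ) hw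
  nlinarith [h1, h2, heq, hsum]
end

section
/- Let f be a greyscale of a finite simple connected graph G and let u and v be distinct vertices such that F(u,v) = max over all pairs of vertices a,b of F(a,b). Then every edge e lying on some u–v geodesic satisfies f̂(e) = F(u,v). -/
open SimpleGraph

lemma walk_sum {V : Type*} {G : SimpleGraph V} (f : V → ℝ) :
    ∀ {u v : V} (p : G.Walk u v), |f u - f v| ≤ (p.edges.map (greyTone f)).sum := by
  intro u v p
  induction p with
  | nil => simp
  | cons h q ih =>
    rename_i a b c
    simp only [SimpleGraph.Walk.edges_cons, List.map_cons, List.sum_cons]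
    calc |f a - f c| ≤ |f a - f b| + |f b - f c| := abs_sub_le _ _ _
    _ ≤ greyTone f s(a,b) + (q.edges.map (greyTone f)).sum := by
        refine add_le_add ?_ ih
        simp [greyTone]

lemma list_all_eq {M : ℝ} : ∀ (l : List ℝ), (∀ x ∈ l, x ≤ M) →
    (l.length : ℝ) * M ≤ l.sum → ∀ x ∈ l, x = M := by
  intro l
  induction l with
  | nil => simp
  | cons a t ih =>
    intro hle hsum x hx
    have hts : t.sum ≤ t.length * M := by
      have := List.sum_le_card_nsmul t M (fun x hx => hle x (List.mem_cons_of_mem _ hx))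
      simpa [nsmul_eq_mul, mul_comm] using this
    have haM : a ≤ M := hle a List.mem_cons_self
    have haeq : a = M := by
      by_contra hne
      have : a < M := lt_of_le_of_ne haM hne
      simp only [List.sum_cons, List.length_cons] at hsum
      push_cast at hsum
      linarith
    rcases List.mem_cons.mp hx with rfl | hx'
    · exact haeq
    · apply ih (fun x hx => hle x (List.mem_cons_of_mem _ hx)) _ x hx'
      simp only [List.sum_cons, List.length_cons] at hsum
      push_cast at hsum
      linarith

theorem stmt_9 {V : Type*} [Fintype V] (G : SimpleGraph V) (hG : G.Connected)
    (f : V → ℝ) (hf : IsGreyscale f) (u v : V) (huv : u ≠ v)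
    (hmax : ∀ a b : V, ecim G f a b ≤ ecim G f u v) :
    ∀ (p : G.Walk u v), p.IsPath → p.length = G.dist u v →
      ∀ e ∈ p.edges, greyTone f e = ecim G f u v := by
  intro p hp hlen e he
  set M := ecim G f u v with hM
  have hn : G.dist u v ≠ 0 :=
    SimpleGraph.dist_ne_zero_iff_ne_and_reachable.mpr ⟨huv, hG.preconnected u v⟩
  have hMeq : M = |f u - f v| / (G.dist u v : ℝ) := by
    rw [hM, ecim]; simp [huv]
  have hnM : (G.dist u v : ℝ) * M = |f u - f v| := by
    rw [hMeq]
    field_simp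
  have hle : ∀ x ∈ p.edges.map (greyTone f), x ≤ M := by
    intro x hx
    rcases List.mem_map.mp hx with ⟨e', he', rfl⟩
    induction e' using Sym2.ind with
    | _ a b =>
      have hadj : G.Adj a b := p.adj_of_mem_edges he'
      have hd1 : G.dist a b = 1 := SimpleGraph.dist_eq_one_iff_adj.mpr hadj
      have : greyTone f s(a, b) = ecim G f a b := by
        rw [ecim]; simp [hadj.ne, hd1, greyTone]
      rw [this]; exact hmax a b
  have hsum : ((p.edges.map (greyTone f)).length : ℝ) * M ≤ (p.edges.map (greyTone f)).sum := by
    have h1 : |f u - f v| ≤ (p.edges.map (greyTone f)).sum := walk_sum f p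
    have h2 : (p.edges.map (greyTone f)).length = G.dist u v := by
      rw [List.length_map, SimpleGraph.Walk.length_edges, hlen]
    rw [h2, hnM]; exact h1
  exact list_all_eq _ hle hsum _ (List.mem_map.mpr ⟨e, he, rfl⟩)
end

section
/- Let G be a finite simple connected graph with at least two vertices and diameter d(G), and let f be a minimum gradation greyscale of G. If u and v are vertices with f(u) = 0 and f(v) = 1, then u and v are antipodal, i.e. d(u,v) = d(G). -/
open SimpleGraph

/-- The gradation vector: the grey tones of all edges, sorted in decreasing order. -/
noncomputable def gradVec {V : Type*} [Fintype V] (G : SimpleGraph V) (f : V → ℝ) : List ℝ :=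
  letI := Classical.decEq V
  letI : DecidableRel G.Adj := Classical.decRel _
  (G.edgeFinset.val.map (greyTone f)).sort (· ≥ ·)

/-- Lexicographic comparison of gradation vectors: `f` is smaller than or equal to `g`. -/
def GradLE {V : Type*} [Fintype V] (G : SimpleGraph V) (f g : V → ℝ) : Prop :=
  gradVec G f = gradVec G g ∨ List.Lex (· < ·) (gradVec G f) (gradVec G g)

/-- A minimum gradation greyscale: a greyscale whose gradation vector is lexicographically
minimal among the gradation vectors of all greyscales. -/
def IsMinGradGreyscale {V : Type*} [Fintype V] (G : SimpleGraph V) (f : V → ℝ) : Prop :=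
  IsGreyscale f ∧ ∀ g : V → ℝ, IsGreyscale g → GradLE G f g

lemma greyTone_mk {V : Type*} (f : V → ℝ) (a b : V) : greyTone f s(a, b) = |f a - f b| := by
  simp [greyTone]

/-- Telescoping: the difference of tones of the endpoints of a walk is bounded by the sum
of the grey tones of its edges. -/
lemma greyTone_telescope {V : Type*} (G : SimpleGraph V) (f : V → ℝ) :
    ∀ {a b : V} (p : G.Walk a b), |f a - f b| ≤ (p.edges.map (greyTone f)).sum := by
  intro a b p
  induction p with
  | nil => simp
  | @cons x y z h q ih =>
    simp only [Walk.edges_cons, List.map_cons, List.sum_cons, greyTone_mk]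
    calc |f x - f z| ≤ |f x - f y| + |f y - f z| := abs_sub_le _ _ _
      _ ≤ |f x - f y| + (q.edges.map (greyTone f)).sum := by linarith

lemma mem_gradVec {V : Type*} [Fintype V] (G : SimpleGraph V) (f : V → ℝ) (x : ℝ) :
    x ∈ gradVec G f ↔ ∃ e ∈ G.edgeSet, greyTone f e = x := by
  unfold gradVec
  rw [Multiset.mem_sort, Multiset.mem_map]
  simp [← SimpleGraph.mem_edgeFinset]
  simp only [SimpleGraph.mem_edgeFinset]

lemma gradVec_sorted {V : Type*} [Fintype V] (G : SimpleGraph V) (f : V → ℝ) :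
    (gradVec G f).Pairwise (· ≥ ·) := by
  unfold gradVec
  exact Multiset.pairwise_sort _ _

/-- If `f` is lexicographically at most `g`, `f`'s vector is decreasing and contains an
entry `> c`, then `g`'s vector cannot be bounded by `c`. -/
lemma lex_contra {l1 l2 : List ℝ} (h : l1 = l2 ∨ List.Lex (· < ·) l1 l2)
    (hs : l1.Pairwise (· ≥ ·)) {x c : ℝ} (hx : x ∈ l1) (hc : c < x)
    (h2 : ∀ y ∈ l2, y ≤ c) : False := by
  rcases h with rfl | h
  · exact absurd (h2 x hx) (not_le.2 hc)
  · cases l1 with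
    | nil => simp at hx
    | cons a t =>
      have ha : c < a := by
        rcases List.mem_cons.1 hx with rfl | hxt
        · exact hc
        · exact lt_of_lt_of_le hc ((List.pairwise_cons.1 hs).1 x hxt)
      cases h with
      | rel hr => exact absurd (h2 _ List.mem_cons_self) (not_le.2 (ha.trans hr))
      | cons h' => exact absurd (h2 a List.mem_cons_self) (not_le.2 ha)

lemma dist_real_abs_le_one {V : Type*} {G : SimpleGraph V} (hG : G.Connected)
    {x y : V} (hadj : G.Adj x y) (a : V) :
    |(G.dist x a : ℝ) - (G.dist y a : ℝ)| ≤ 1 := by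
  have hxy : G.dist x y = 1 := SimpleGraph.dist_eq_one_iff_adj.mpr hadj
  have hyx : G.dist y x = 1 := SimpleGraph.dist_eq_one_iff_adj.mpr hadj.symm
  have t1 : G.dist x a ≤ G.dist y a + 1 := by
    have := hG.dist_triangle (u := x) (v := y) (w := a)
    omega
  have t2 : G.dist y a ≤ G.dist x a + 1 := by
    have := hG.dist_triangle (u := y) (v := x) (w := a)
    omega
  rw [abs_sub_le_iff]
  constructor <;>
  · have : ((G.dist x a : ℝ) ≤ G.dist y a + 1) ∧ ((G.dist y a : ℝ) ≤ G.dist x a + 1) :=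
      ⟨by exact_mod_cast t1, by exact_mod_cast t2⟩
    linarith [this.1, this.2]

/-- The support greyscale is a greyscale and all its grey tones are at most `1/D`. -/
lemma support_props {V : Type*} (G : SimpleGraph V) (hG : G.Connected)
    {a b : V} {D : ℕ} (hD : 1 ≤ D) (hab : G.dist a b = D)
    (hub : ∀ x y : V, G.dist x y ≤ D) :
    IsGreyscale (supportGreyscale G a b D) ∧
      ∀ e ∈ G.edgeSet, greyTone (supportGreyscale G a b D) e ≤ 1 / (D : ℝ) := by
  have hDpos : (0:ℝ) < D := by exact_mod_cast hD
  constructor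
  · refine ⟨fun w => ?_, ⟨a, ?_⟩, ⟨b, ?_⟩⟩
    · have h1 : (G.dist w a : ℝ) ≤ D := by exact_mod_cast hub w a
      have h2 : (G.dist w b : ℝ) ≤ D := by exact_mod_cast hub w b
      have h3 : (0:ℝ) ≤ G.dist w a := Nat.cast_nonneg _
      have h4 : (0:ℝ) ≤ G.dist w b := Nat.cast_nonneg _
      unfold supportGreyscale
      constructor
      · apply div_nonneg <;> linarith
      · rw [div_le_one (by linarith)]; linarith
    · simp [supportGreyscale, SimpleGraph.dist_self, hab]
    · have hba : G.dist b a = D := by rw [SimpleGraph.dist_comm]; exact hab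
      simp only [supportGreyscale, SimpleGraph.dist_self, hba, Nat.cast_zero]
      field_simp
      ring
  · intro e he
    induction e with
    | _ x y =>
      have hadj : G.Adj x y := (SimpleGraph.mem_edgeSet G).1 he
      have hd1 := dist_real_abs_le_one hG hadj a
      have hd2 := dist_real_abs_le_one hG hadj b
      rw [greyTone_mk]
      have heq : supportGreyscale G a b D x - supportGreyscale G a b D y =
          (((G.dist x a : ℝ) - (G.dist y a : ℝ)) - ((G.dist x b : ℝ) - (G.dist y b : ℝ)))
            / (2 * (D : ℝ)) := by
        unfold supportGreyscale
        field_simp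
        ring
      rw [heq, abs_div, abs_of_pos (by linarith : (0:ℝ) < 2 * D)]
      have hnum : |(((G.dist x a : ℝ) - (G.dist y a : ℝ)) -
          ((G.dist x b : ℝ) - (G.dist y b : ℝ)))| ≤ 2 := by
        rw [abs_le]
        constructor <;> linarith [(abs_le.1 hd1).1, (abs_le.1 hd1).2,
          (abs_le.1 hd2).1, (abs_le.1 hd2).2]
      have h2D : (1:ℝ) / D = 2 / (2 * D) := by field_simp
      rw [h2D]
      gcongr

theorem stmt_12 {V : Type*} [Fintype V] [Nontrivial V] (G : SimpleGraph V)
    (hG : G.Connected) (D : ℕ)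
    (hDub : ∀ a b : V, G.dist a b ≤ D)
    (hDmax : ∃ a b : V, G.dist a b = D)
    (f : V → ℝ) (hmin : IsMinGradGreyscale G f)
    (u v : V) (h0 : f u = 0) (h1 : f v = 1) :
    G.dist u v = D := by
  classical
  obtain ⟨hf, hmin2⟩ := hmin
  obtain ⟨a0, b0, hab0⟩ := exists_pair_ne V
  have hD1 : 1 ≤ D := le_trans (hG.pos_dist_of_ne hab0) (hDub a0 b0)
  have hDpos : (0:ℝ) < D := by exact_mod_cast hD1
  by_contra hne
  have hL : G.dist u v < D := lt_of_le_of_ne (hDub u v) hne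
  -- there is an edge of `f` with tone greater than `1/D`
  have key : ∃ e ∈ G.edgeSet, 1 / (D:ℝ) < greyTone f e := by
    by_contra hcon
    push_neg at hcon
    obtain ⟨p, hp⟩ := hG.exists_walk_length_eq_dist u v
    have hsum : (p.edges.map (greyTone f)).sum ≤ (p.edges.map (greyTone f)).length • (1/(D:ℝ)) :=
      List.sum_le_card_nsmul _ _ (by
        intro x hx
        obtain ⟨e, he, rfl⟩ := List.mem_map.1 hx
        exact hcon e (p.edges_subset_edgeSet he))
    have h1le : (1:ℝ) ≤ (p.edges.map (greyTone f)).sum := by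
      have := greyTone_telescope G f p
      rw [h0, h1] at this
      simpa using this
    rw [List.length_map, p.length_edges, hp, nsmul_eq_mul, mul_one_div] at hsum
    have hlt : ((G.dist u v : ℝ)) / D < 1 := by
      rw [div_lt_one hDpos]
      exact_mod_cast hL
    linarith
  obtain ⟨e, he, hbig⟩ := key
  obtain ⟨a, b, hab⟩ := hDmax
  obtain ⟨hg, htone⟩ := support_props G hG hD1 hab hDub
  refine lex_contra (hmin2 _ hg) (gradVec_sorted G f)
    ((mem_gradVec G f _).2 ⟨e, he, rfl⟩) hbig ?_
  intro y hy
  obtain ⟨e', he', rfl⟩ := (mem_gradVec G _ y).1 hy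
  exact htone e' he'
end

section
/- Let P be the path graph with vertices w_0, w_1, …, w_n (n ≥ 1) and edges {w_{i−1}, w_i} for i = 1, …, n. Then the greyscale f defined by f(w_i) = i/n is a minimum gradation greyscale of P, and its gradation vector is the constant vector all of whose n components equal 1/n. -/
open SimpleGraph

lemma sort_replicate (n : ℕ) (a : ℝ) :
    (Multiset.replicate n a).sort (· ≥ ·) = List.replicate n a := by
  have h : ((Multiset.replicate n a).sort (· ≥ ·) : Multiset ℝ) = Multiset.replicate n a :=
    Multiset.sort_eq _ _
  rw [← Multiset.coe_replicate, Multiset.coe_eq_coe] at h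
  refine List.eq_replicate_iff.mpr ⟨?_, ?_⟩
  · simpa using h.length_eq
  · intro b hb
    have := h.mem_iff.mp hb
    exact List.eq_of_mem_replicate this
lemma lex_min (c : ℝ) : ∀ (L : List ℝ), L.Pairwise (· ≥ ·) →
    (L.length : ℝ) * c ≤ L.sum →
    List.replicate L.length c = L ∨ List.Lex (· < ·) (List.replicate L.length c) L := by
  intro L
  induction L with
  | nil => intro _ _; left; rfl
  | cons a t ih =>
    intro hs hsum
    obtain ⟨hat, ht⟩ := List.pairwise_cons.mp hs
    have h1 : t.sum ≤ (t.length : ℝ) * a := by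
      have := List.sum_le_card_nsmul t a (fun x hx => hat x hx)
      simpa [nsmul_eq_mul] using this
    have hlen : ((a :: t).length : ℝ) = (t.length : ℝ) + 1 := by push_cast [List.length_cons]; ring
    have hsum' : ((t.length : ℝ) + 1) * c ≤ a + t.sum := by
      rw [← hlen]; simpa [List.sum_cons] using hsum
    have hca : c ≤ a := by nlinarith [Nat.cast_nonneg (α := ℝ) t.length]
    rcases eq_or_lt_of_le hca with heq | hlt
    · subst heq
      have hrec : (t.length : ℝ) * c ≤ t.sum := by linarith
      rcases ih ht hrec with h | h
      · left; rw [List.length_cons, List.replicate_succ, h]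
      · right; rw [List.length_cons, List.replicate_succ]; exact List.Lex.cons h
    · right; rw [List.length_cons, List.replicate_succ]; exact List.Lex.rel hlt

lemma path_edge_inj (n : ℕ) :
    Function.Injective (fun i : Fin n => s(Fin.castSucc i, Fin.succ i)) := by
  intro i j h
  simp only [Sym2.eq, Sym2.rel_iff', Prod.mk.injEq, Prod.swap_prod_mk] at h
  rcases h with ⟨h1, _⟩ | ⟨h1, h2⟩
  · exact Fin.castSucc_injective n h1
  · have a1 : (i : ℕ) = (j : ℕ) + 1 := by
      have := congrArg Fin.val h1; simpa using this
    have a2 : (j : ℕ) = (i : ℕ) + 1 := by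
      have := congrArg Fin.val h2; simpa using this.symm
    omega

lemma path_edgeFinset (n : ℕ) [DecidableRel (pathGraph (n+1)).Adj] :
    (pathGraph (n+1)).edgeFinset
      = Finset.image (fun i : Fin n => s(Fin.castSucc i, Fin.succ i)) Finset.univ := by
  ext e
  induction e with
  | _ u v =>
    simp only [mem_edgeFinset, mem_edgeSet, Finset.mem_image, Finset.mem_univ, true_and,
      pathGraph_adj]
    constructor
    · rintro (h | h)
      · have hu : (u : ℕ) < n := by omega
        refine ⟨⟨u, hu⟩, ?_⟩
        have hu' : Fin.castSucc ⟨(u : ℕ), hu⟩ = u := Fin.ext (by simp)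
        have hv' : Fin.succ ⟨(u : ℕ), hu⟩ = v := Fin.ext (by simp [Fin.val_succ]; omega)
        rw [hu', hv']
      · have hv : (v : ℕ) < n := by omega
        refine ⟨⟨v, hv⟩, ?_⟩
        have hu' : Fin.castSucc ⟨(v : ℕ), hv⟩ = v := Fin.ext (by simp)
        have hv' : Fin.succ ⟨(v : ℕ), hv⟩ = u := Fin.ext (by simp [Fin.val_succ]; omega)
        rw [Sym2.eq_swap, hu', hv']
    · rintro ⟨i, hi⟩
      rw [Sym2.eq, Sym2.rel_iff'] at hi
      simp only [Prod.mk.injEq, Prod.swap_prod_mk] at hi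
      rcases hi with ⟨rfl, rfl⟩ | ⟨rfl, rfl⟩
      · left; simp
      · right; simp

lemma gradVec_path (n : ℕ) (g : Fin (n+1) → ℝ) :
    gradVec (pathGraph (n+1)) g
      = (Multiset.map (fun i : Fin n => |g (Fin.castSucc i) - g (Fin.succ i)|)
          Finset.univ.val).sort (· ≥ ·) := by
  unfold gradVec
  congr 1
  letI : DecidableRel (pathGraph (n+1)).Adj := Classical.decRel _
  rw [path_edgeFinset n, Finset.image_val_of_injOn ((path_edge_inj n).injOn),
    Multiset.map_map]
  rfl

lemma abs_sub_le_sum (n : ℕ) (g : Fin (n+1) → ℝ) (a b : Fin (n+1)) :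
    |g a - g b| ≤ ∑ i : Fin n, |g (Fin.castSucc i) - g (Fin.succ i)| := by
  set g' : ℕ → ℝ := fun i => g ⟨min i n, by omega⟩ with hg'
  have hg'eq : ∀ (m : ℕ) (h : m ≤ n), g' m = g ⟨m, by omega⟩ := by
    intro m h; simp only [hg']; congr 1; exact Fin.ext (by simp [Nat.min_eq_left h])
  have hsum : ∑ i : Fin n, |g (Fin.castSucc i) - g (Fin.succ i)|
      = ∑ i ∈ Finset.range n, |g' i - g' (i+1)| := by
    rw [← Fin.sum_univ_eq_sum_range (fun i => |g' i - g' (i+1)|) n]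
    refine Finset.sum_congr rfl ?_
    intro i _
    rw [hg'eq i (by omega), hg'eq (i+1) (by omega)]
    congr 2 <;> exact congrArg g (Fin.ext (by simp [Fin.val_succ]))
  have tele : ∀ (k j : ℕ), |g' j - g' (j+k)| ≤ ∑ i ∈ Finset.Ico j (j+k), |g' i - g' (i+1)| := by
    intro k
    induction k with
    | zero => intro j; simp
    | succ m ih =>
      intro j
      have h1 : |g' j - g' (j+(m+1))| ≤ |g' j - g' (j+m)| + |g' (j+m) - g' (j+m+1)| := by
        have := abs_sub_le (g' j) (g' (j+m)) (g' (j+m+1))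
        simpa [← add_assoc] using this
      have h2 : ∑ i ∈ Finset.Ico j (j+(m+1)), |g' i - g' (i+1)|
          = ∑ i ∈ Finset.Ico j (j+m), |g' i - g' (i+1)| + |g' (j+m) - g' (j+m+1)| := by
        rw [show j+(m+1) = (j+m)+1 by ring, Finset.sum_Ico_succ_top (by omega)]
      rw [h2]
      calc |g' j - g' (j+(m+1))| ≤ |g' j - g' (j+m)| + |g' (j+m) - g' (j+m+1)| := h1
        _ ≤ _ := by gcongr; exact ih j
  rw [hsum]
  have key : ∀ u v : Fin (n+1), (u : ℕ) ≤ (v : ℕ) →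
      |g u - g v| ≤ ∑ i ∈ Finset.range n, |g' i - g' (i+1)| := by
    intro u v huv
    have hu : g u = g' (u : ℕ) := by
      rw [hg'eq (u : ℕ) (by omega)]
    have hv : g v = g' ((u : ℕ) + ((v : ℕ) - (u : ℕ))) := by
      rw [hg'eq _ (by omega)]; congr 1; exact Fin.ext (by simp only [Fin.val_mk]; omega)
    rw [hu, hv]
    calc |g' (u:ℕ) - g' ((u:ℕ) + ((v:ℕ) - (u:ℕ)))|
        ≤ ∑ i ∈ Finset.Ico (u:ℕ) ((u:ℕ) + ((v:ℕ) - (u:ℕ))), |g' i - g' (i+1)| := tele _ _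
      _ ≤ ∑ i ∈ Finset.range n, |g' i - g' (i+1)| := by
          apply Finset.sum_le_sum_of_subset_of_nonneg
          · intro x hx
            simp only [Finset.mem_Ico] at hx
            simp only [Finset.mem_range]
            omega
          · intros; positivity
  rcases le_total (a : ℕ) (b : ℕ) with hab | hab
  · exact key a b hab
  · rw [abs_sub_comm]; exact key b a hab

theorem stmt_13 (n : ℕ) (hn : 1 ≤ n) :
    IsMinGradGreyscale (pathGraph (n + 1)) (fun i : Fin (n + 1) => ((i : ℕ) : ℝ) / (n : ℝ)) ∧
    gradVec (pathGraph (n + 1)) (fun i : Fin (n + 1) => ((i : ℕ) : ℝ) / (n : ℝ)) =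
      List.replicate n (1 / (n : ℝ)) := by
  have hn0 : (n : ℝ) ≠ 0 := Nat.cast_ne_zero.mpr (by omega)
  have hnpos : (0 : ℝ) < n := by positivity
  set f : Fin (n+1) → ℝ := fun i => ((i : ℕ) : ℝ) / (n : ℝ) with hf
  -- gradVec of f
  have hvec : gradVec (pathGraph (n+1)) f = List.replicate n (1 / (n : ℝ)) := by
    rw [gradVec_path]
    have hmap : (Multiset.map (fun i : Fin n => |f (Fin.castSucc i) - f (Fin.succ i)|)
        (Finset.univ.val : Multiset (Fin n)))
        = Multiset.replicate n (1 / (n : ℝ)) := by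
      have : (fun i : Fin n => |f (Fin.castSucc i) - f (Fin.succ i)|)
          = Function.const (Fin n) (1 / (n : ℝ)) := by
        funext i
        simp only [hf, Function.const, Fin.coe_castSucc, Fin.val_succ]
        push_cast
        rw [div_sub_div_same, show ((i:ℕ):ℝ) - ((i:ℕ) + 1) = -1 by ring, abs_div,
          abs_neg, abs_one, abs_of_pos hnpos]
      rw [this, Multiset.map_const]
      congr 1
      simp
    rw [hmap, sort_replicate]
  refine ⟨⟨?_, ?_⟩, hvec⟩
  · -- IsGreyscale f
    refine ⟨fun w => ⟨by positivity, ?_⟩, ⟨0, by simp [hf]⟩, ⟨Fin.last n, ?_⟩⟩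
    · apply div_le_one_of_le₀
      · exact_mod_cast Nat.le_of_lt_succ w.isLt
      · positivity
    · simp [hf, Fin.last, div_self hn0]
  · -- minimality
    intro g hg
    obtain ⟨hb, ⟨a, ha0⟩, ⟨b, hb1⟩⟩ := hg
    set L := gradVec (pathGraph (n+1)) g with hL
    have hLsort : L.Pairwise (· ≥ ·) := by
      rw [hL, gradVec_path]; exact Multiset.pairwise_sort _ _
    have hLlen : L.length = n := by
      rw [hL, gradVec_path, Multiset.length_sort]; simp
    have hLsum : L.sum = ∑ i : Fin n, |g (Fin.castSucc i) - g (Fin.succ i)| := by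
      have : (L : Multiset ℝ)
          = Multiset.map (fun i : Fin n => |g (Fin.castSucc i) - g (Fin.succ i)|)
            Finset.univ.val := by
        rw [hL, gradVec_path]; exact Multiset.sort_eq _ _
      calc L.sum = ((L : Multiset ℝ)).sum := by simp
        _ = _ := by rw [this]; rfl
    have hsum1 : (1 : ℝ) ≤ L.sum := by
      rw [hLsum]
      have := abs_sub_le_sum n g b a
      rw [hb1, ha0] at this
      simpa using this
    have hle : (L.length : ℝ) * (1 / (n : ℝ)) ≤ L.sum := by
      rw [hLlen]
      rw [mul_one_div, div_self hn0]
      exact hsum1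
    rcases lex_min (1 / (n : ℝ)) L hLsort hle with h | h
    · left; rw [hvec]; rw [hLlen] at h; exact h
    · right; rw [hvec]; rw [hLlen] at h; exact h
end

section
/- Let G be a finite simple connected graph with vertex set V, let V_c be a nonempty proper subset of V, and let g : V_c → [0,1] be an incomplete V_c-greyscale of G such that the value 0 is attained by g but the value 1 is not. Then there exists a greyscale f of G compatible with g whose gradation vector is lexicographically minimal among the gradation vectors of all greyscales of G compatible with g. -/
open SimpleGraph

/-! ### Auxiliary machinery -/

/-- Strict lexicographic comparison of `Fin n`-indexed real vectors. -/
def AuxLexLt {n : ℕ} (y x : Fin n → ℝ) : Prop :=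
  ∃ i, (∀ j, j < i → y j = x j) ∧ y i < x i

theorem aux_exists_lex_min : ∀ (n : ℕ) (S : Set (Fin n → ℝ)), IsCompact S → S.Nonempty →
    ∃ x ∈ S, ∀ y ∈ S, ¬ AuxLexLt y x := by
  intro n
  induction n with
  | zero =>
    intro S _ hne
    obtain ⟨x, hx⟩ := hne
    exact ⟨x, hx, fun y _ ⟨i, _⟩ => i.elim0⟩
  | succ n ih =>
    intro S hS hne
    obtain ⟨x0, hx0S, hx0min⟩ := hS.exists_isMinOn hne (continuous_apply 0).continuousOn
    set S0 : Set (Fin (n+1) → ℝ) := S ∩ {x | x 0 = x0 0} with hS0def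
    have hS0c : IsCompact S0 :=
      hS.inter_right (isClosed_eq (continuous_apply 0) continuous_const)
    have hS0ne : S0.Nonempty := ⟨x0, hx0S, rfl⟩
    have htc : Continuous (fun x : Fin (n+1) → ℝ => x ∘ Fin.succ) :=
      continuous_pi fun i => continuous_apply _
    obtain ⟨y, hyT, hymin⟩ := ih _ (hS0c.image htc) (hS0ne.image _)
    obtain ⟨x, hxS0, hxy⟩ := hyT
    refine ⟨x, hxS0.1, ?_⟩
    rintro z hz ⟨i, hpre, hlt⟩
    revert hpre hlt
    refine Fin.cases ?_ ?_ i
    · intro _ hlt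
      have h1 : x 0 = x0 0 := hxS0.2
      have h2 : x0 0 ≤ z 0 := hx0min hz
      simp only [h1] at hlt
      linarith
    · intro i' hpre hlt
      have hz0 : z 0 = x0 0 := by
        rw [hpre 0 (Fin.succ_pos i'), hxS0.2]
      have hzS0 : z ∈ S0 := ⟨hz, hz0⟩
      refine hymin (z ∘ Fin.succ) ⟨z, hzS0, rfl⟩ ⟨i', fun j hj => ?_, ?_⟩
      · exact (congrFun hxy j) ▸ hpre j.succ (Fin.strictMono_succ hj)
      · rw [← hxy]; exact hlt

theorem aux_lex_exists_index : ∀ {l₁ l₂ : List ℝ}, l₁.length = l₂.length →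
    List.Lex (· < ·) l₁ l₂ →
    ∃ i < l₁.length, (∀ j < i, l₁.getD j 0 = l₂.getD j 0) ∧ l₁.getD i 0 < l₂.getD i 0 := by
  intro l₁ l₂ hlen h
  induction h with
  | nil => simp at hlen
  | @rel a l₁' b l₂' hab =>
    exact ⟨0, by simp, fun j hj => absurd hj (Nat.not_lt_zero j), by simpa⟩
  | @cons a l₁' l₂' h ih =>
    obtain ⟨i, hi, hpre, hlt⟩ := ih (by simpa using hlen)
    refine ⟨i + 1, by simpa using hi, ?_, by simpa using hlt⟩
    intro j hj
    match j with
    | 0 => simp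
    | k + 1 => simpa using hpre k (by omega)

theorem aux_greyTone_continuous {V : Type*} (e : Sym2 V) :
    Continuous fun f : V → ℝ => greyTone f e := by
  induction e using Sym2.ind with
  | _ a b =>
    have : (fun f : V → ℝ => greyTone f s(a, b)) = fun f => |f a - f b| := by
      funext f; simp [greyTone]
    rw [this]
    exact ((continuous_apply a).sub (continuous_apply b)).abs

theorem aux_exists_edge_list {V : Type*} [Fintype V] (G : SimpleGraph V) :
    ∃ L : List (Sym2 V), ∀ f : V → ℝ,
      gradVec G f = (↑(L.map (greyTone f)) : Multiset ℝ).sort (· ≥ ·) := by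
  classical
  letI := Classical.decEq V
  letI : DecidableRel G.Adj := Classical.decRel _
  refine ⟨G.edgeFinset.val.toList, fun f => ?_⟩
  unfold gradVec
  congr 1
  rw [← Multiset.map_coe, Multiset.coe_toList]

theorem aux_gradVec_eq_ofFn {V : Type*} [Fintype V] {G : SimpleGraph V}
    {L : List (Sym2 V)}
    (hL : ∀ f : V → ℝ, gradVec G f = (↑(L.map (greyTone f)) : Multiset ℝ).sort (· ≥ ·))
    (f : V → ℝ) {x : Fin L.length → ℝ} (hx : Antitone x)
    (σ : Equiv.Perm (Fin L.length)) (hxσ : x = (fun i => greyTone f (L.get i)) ∘ σ) :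
    gradVec G f = List.ofFn x := by
  have hperm : List.Perm (gradVec G f) (List.ofFn x) := by
    have h1 : List.Perm (gradVec G f) (L.map (greyTone f)) := by
      rw [hL f]
      exact Multiset.coe_eq_coe.mp (Multiset.sort_eq _ _)
    have h2 : List.Perm (List.ofFn x) (List.ofFn fun i => greyTone f (L.get i)) := by
      rw [hxσ]; exact σ.ofFn_comp_perm _
    have h3 : (List.ofFn fun i => greyTone f (L.get i)) = L.map (greyTone f) :=
      List.ofFn_getElem_eq_map L (greyTone f)
    exact h1.trans ((h2.trans (h3 ▸ List.Perm.refl _)).symm)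
  refine List.Perm.eq_of_pairwise' (r := (· ≥ ·)) ?_ ?_ hperm
  · rw [hL f]; exact Multiset.pairwise_sort _ _
  · rw [List.pairwise_ofFn]
    intro i j hij
    exact hx (le_of_lt hij)

theorem aux_ofFn_getD {n : ℕ} (x : Fin n → ℝ) (j : Fin n) :
    (List.ofFn x).getD (j : ℕ) 0 = x j := by
  rw [List.getD_eq_getElem _ _ (by simpa using j.isLt), List.getElem_ofFn]

theorem stmt_18 {V : Type*} [Fintype V] (G : SimpleGraph V) (hG : G.Connected)
    (Vc : Set V) (hne : Vc.Nonempty) (hproper : Vc ≠ Set.univ)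
    (g : Vc → ℝ) (hg : ∀ u : Vc, 0 ≤ g u ∧ g u ≤ 1)
    (h0 : ∃ a : Vc, g a = 0) (h1 : ¬ ∃ b : Vc, g b = 1) :
    ∃ f : V → ℝ, IsGreyscale f ∧ (∀ u : Vc, f u = g u) ∧
      ∀ h : V → ℝ, IsGreyscale h → (∀ u : Vc, h u = g u) → GradLE G f h := by
  classical
  obtain ⟨L, hL⟩ := aux_exists_edge_list G
  set m := L.length with hm
  set τ : (V → ℝ) → (Fin m → ℝ) := fun f i => greyTone f (L.get i) with hτ
  have hτc : Continuous τ := continuous_pi fun i => aux_greyTone_continuous _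
  set K : Set (V → ℝ) :=
    {f | (∀ w, 0 ≤ f w ∧ f w ≤ 1) ∧ (∀ u : Vc, f u = g u) ∧ ∃ b, f b = 1} with hKdef
  -- K is compact
  have hKclosed : IsClosed K := by
    have : K = (⋂ w : V, {f : V → ℝ | f w ∈ Set.Icc (0:ℝ) 1}) ∩
        ((⋂ u : Vc, {f : V → ℝ | f u = g u}) ∩ (⋃ b : V, {f : V → ℝ | f b = 1})) := by
      ext f
      simp only [hKdef, Set.mem_setOf_eq, Set.mem_inter_iff, Set.mem_iInter, Set.mem_iUnion,
        Set.mem_Icc]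
    rw [this]
    refine ((isClosed_iInter fun w => ?_).inter ((isClosed_iInter fun u => ?_).inter
      (isClosed_iUnion_of_finite fun b => ?_)))
    · exact (isClosed_Icc).preimage (continuous_apply w)
    · exact isClosed_eq (continuous_apply _) continuous_const
    · exact isClosed_eq (continuous_apply b) continuous_const
  have hKcomp : IsCompact K := by
    refine (isCompact_univ_pi fun _ : V => isCompact_Icc (a := (0:ℝ)) (b := 1)).of_isClosed_subset hKclosed ?_
    intro f hf
    simp only [Set.mem_univ_pi, Set.mem_Icc]
    exact fun w => hf.1 w
  -- K is nonempty
  have hKne : K.Nonempty := by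
    obtain ⟨b, hb⟩ := Set.ne_univ_iff_exists_notMem _ |>.mp hproper
    refine ⟨fun v => if hv : v ∈ Vc then g ⟨v, hv⟩ else 1, ?_, ?_, ⟨b, dif_neg hb⟩⟩
    · intro w
      by_cases hw : w ∈ Vc
      · simp only [dif_pos hw]; exact hg _
      · simp only [dif_neg hw]; exact ⟨zero_le_one, le_refl 1⟩
    · intro u
      simp only [dif_pos u.2]
  -- every element of K is a greyscale
  have hKgrey : ∀ f ∈ K, IsGreyscale f := by
    intro f hf
    obtain ⟨a, ha⟩ := h0
    exact ⟨hf.1, ⟨a, by rw [hf.2.1 a, ha]⟩, hf.2.2⟩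
  -- the compact set of sorted tone vectors
  have hAntiClosed : IsClosed {x : Fin m → ℝ | Antitone x} := by
    have : {x : Fin m → ℝ | Antitone x} =
        ⋂ (i : Fin m), ⋂ (j : Fin m), ⋂ (_ : i ≤ j), {x : Fin m → ℝ | x j ≤ x i} := by
      ext x
      simp only [Set.mem_setOf_eq, Set.mem_iInter]
      exact ⟨fun hx i j hij => hx hij, fun hx i j hij => hx i j hij⟩
    rw [this]
    exact isClosed_iInter fun i => isClosed_iInter fun j => isClosed_iInter fun _ =>
      isClosed_le (continuous_apply j) (continuous_apply i)
  set S : Set (Fin m → ℝ) :=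
    ⋃ σ : Equiv.Perm (Fin m), ((fun u => u ∘ σ) '' (τ '' K)) ∩ {x | Antitone x} with hSdef
  have hScomp : IsCompact S := by
    refine isCompact_iUnion fun σ => ?_
    refine IsCompact.inter_right ?_ hAntiClosed
    exact (hKcomp.image hτc).image (continuous_pi fun i => continuous_apply (σ i))
  have hmemS : ∀ f ∈ K, ∃ x ∈ S, gradVec G f = List.ofFn x := by
    intro f hf
    set σ := Tuple.sort (fun i => -τ f i) with hσ
    have hmono := Tuple.monotone_sort (fun i => -τ f i)
    have hanti : Antitone (τ f ∘ σ) := by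
      intro i j hij
      have := hmono hij
      simp only [Function.comp_apply] at this ⊢
      linarith
    refine ⟨τ f ∘ σ, ?_, aux_gradVec_eq_ofFn hL f hanti σ rfl⟩
    exact Set.mem_iUnion.mpr ⟨σ, ⟨τ f, ⟨f, hf, rfl⟩, rfl⟩, hanti⟩
  have hSne : S.Nonempty := by
    obtain ⟨f, hf⟩ := hKne
    obtain ⟨x, hxS, _⟩ := hmemS f hf
    exact ⟨x, hxS⟩
  -- take the lexicographically minimal sorted tone vector
  obtain ⟨x, hxS, hxmin⟩ := aux_exists_lex_min m S hScomp hSne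
  obtain ⟨σ, ⟨u, ⟨f, hfK, hfu⟩, hux⟩, hxanti⟩ := Set.mem_iUnion.mp hxS
  have hxτ : x = τ f ∘ σ := by rw [← hux, ← hfu]
  have hgradf : gradVec G f = List.ofFn x := aux_gradVec_eq_ofFn hL f hxanti σ hxτ
  refine ⟨f, hKgrey f hfK, hfK.2.1, ?_⟩
  intro h hhgrey hhcomp
  have hhK : h ∈ K := ⟨hhgrey.1, hhcomp, hhgrey.2.2⟩
  obtain ⟨xh, hxhS, hgradh⟩ := hmemS h hhK
  rcases (trichotomous_of (List.Lex ((· < ·) : ℝ → ℝ → Prop)))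
    (gradVec G f) (gradVec G h) with hlt | heq | hgt
  · exact Or.inr hlt
  · exact Or.inl heq
  · exfalso
    have hlen : (gradVec G h).length = (gradVec G f).length := by
      rw [hgradh, hgradf]; simp
    obtain ⟨i, hi, hpre, hltd⟩ := aux_lex_exists_index hlen hgt
    have him : i < m := by
      rw [hgradh] at hi; simpa using hi
    refine hxmin xh hxhS ⟨⟨i, him⟩, ?_, ?_⟩
    · intro j hj
      have hj' : (j : ℕ) < i := hj
      have := hpre j hj'
      rw [hgradh, hgradf] at this
      rwa [aux_ofFn_getD xh j, aux_ofFn_getD x j] at this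
    · have := hltd
      rw [hgradh, hgradf] at this
      rwa [aux_ofFn_getD xh ⟨i, him⟩, aux_ofFn_getD x ⟨i, him⟩] at this
end
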